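/- arXiv:1704.08478 — 4 statements merged into one kernel-verified Lean document; each statement's English description precedes it below -/
import Mathlib

section
/- Let l₁, l₂, l₃ be three lines (rank-2 flats) in a matroid that are pairwise coplanar (i.e., rk(lᵢ ∪ lⱼ) ≤ 3 for all i ≠ j) but not all lying in a common plane (rk(l₁ ∪ l₂ ∪ l₃) = 4). If l₁ and l₂ intersect in a point p (a rank-1 flat contained in both), then p is also contained in l₃. -/
open Set

namespace StickyKantor

variable {α : Type*}

/-- The rank of a set in a matroid, as an integer (junk value `0` when infinite). -/
noncomputable def rk (M : Matroid α) (X : Set α) : ℤ :=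
  ((⨆ I ∈ {I : Set α | M.Indep I ∧ I ⊆ X}, I.encard).toNat : ℤ)

/-- The modular defect of a pair of sets. -/
noncomputable def mdefect (M : Matroid α) (X Y : Set α) : ℤ :=
  rk M X + rk M Y - rk M (X ∪ Y) - rk M (X ∩ Y)

/-- A modular pair of sets. -/
def ModularPair (M : Matroid α) (X Y : Set α) : Prop :=
  rk M X + rk M Y = rk M (X ∪ Y) + rk M (X ∩ Y)

/-- `M'` is an extension of `M`: it has a larger ground set and restricts to `M`. -/
def IsExtension (M' M : Matroid α) : Prop :=
  M.E ⊆ M'.E ∧ M = M'.restrict M.E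

/-- A point: a rank-1 flat. -/
def IsPoint (M : Matroid α) (p : Set α) : Prop := M.IsFlat p ∧ rk M p = 1

/-- A line: a rank-2 flat. -/
def IsLine (M : Matroid α) (l : Set α) : Prop := M.IsFlat l ∧ rk M l = 2

/-- A plane: a rank-3 flat. -/
def IsPlane (M : Matroid α) (e : Set α) : Prop := M.IsFlat e ∧ rk M e = 3

/-- Two lines are coplanar if their join has rank at most 3. -/
def Coplanar (M : Matroid α) (l₁ l₂ : Set α) : Prop := rk M (l₁ ∪ l₂) ≤ 3

/-- A hyperplane: a maximal proper flat. -/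
def IsHyperplane (M : Matroid α) (H : Set α) : Prop :=
  M.IsFlat H ∧ H ≠ M.E ∧ ∀ F, M.IsFlat F → H ⊂ F → F = M.E

/-- A matroid is hypermodular if every pair of hyperplanes is a modular pair. -/
def Hypermodular (M : Matroid α) : Prop :=
  ∀ H₁ H₂, IsHyperplane M H₁ → IsHyperplane M H₂ → ModularPair M H₁ H₂

/-- A matroid is modular if every pair of flats is a modular pair. -/
def Modular (M : Matroid α) : Prop :=
  ∀ F₁ F₂, M.IsFlat F₁ → M.IsFlat F₂ → ModularPair M F₁ F₂

/-- A modular cut: an up-closed family of flats closed under intersections of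
modular pairs. -/
def IsModularCut (M : Matroid α) (𝓜 : Set (Set α)) : Prop :=
  (∀ F ∈ 𝓜, M.IsFlat F) ∧
  (∀ F ∈ 𝓜, ∀ F', M.IsFlat F' → F ⊆ F' → F' ∈ 𝓜) ∧
  (∀ F₁ ∈ 𝓜, ∀ F₂ ∈ 𝓜, ModularPair M F₁ F₂ → F₁ ∩ F₂ ∈ 𝓜)

/-- The principal modular cut of a flat `F`. -/
def principalCut (M : Matroid α) (F : Set α) : Set (Set α) :=
  {G | M.IsFlat G ∧ F ⊆ G}

/-- The modular cut generated by a family of flats. -/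
def genCut (M : Matroid α) (A : Set (Set α)) : Set (Set α) :=
  ⋂₀ {𝓜 | IsModularCut M 𝓜 ∧ A ⊆ 𝓜}

/-- A non-modular pair of flats is intersectable if the modular cut it generates is
not the principal modular cut of its intersection. -/
def Intersectable (M : Matroid α) (X Y : Set α) : Prop :=
  genCut M {X, Y} ≠ principalCut M (X ∩ Y)

/-- A matroid is OTE (only trivially extendable) if every nonempty modular cut
is principal. -/
def OTE (M : Matroid α) : Prop :=
  ∀ 𝓜, IsModularCut M 𝓜 → 𝓜 ≠ ∅ → ∃ F, M.IsFlat F ∧ 𝓜 = principalCut M F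

/-- A matroid is sticky if every pair of extensions meeting exactly in its ground set
has an amalgam. -/
def Sticky (M : Matroid α) : Prop :=
  ∀ N₁ N₂ : Matroid α, IsExtension N₁ M → IsExtension N₂ M → N₁.E ∩ N₂.E = M.E →
    ∃ A : Matroid α, A.E = N₁.E ∪ N₂.E ∧ IsExtension A N₁ ∧ IsExtension A N₂

/-- The function `η` of the amalgam construction. -/
noncomputable def eta (M M₁ M₂ : Matroid α) (X : Set α) : ℤ :=
  rk M₁ (X ∩ M₁.E) + rk M₂ (X ∩ M₂.E) - rk M (X ∩ M.E)

/-- The function `ξ` of the amalgam construction. -/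
noncomputable def xi (M M₁ M₂ : Matroid α) (X : Set α) : ℤ :=
  sInf {n : ℤ | ∃ Y, X ⊆ Y ∧ Y ⊆ M₁.E ∪ M₂.E ∧ n = eta M M₁ M₂ Y}

/-- The lattice `𝓛(M₁,M₂)` of sets whose traces on both ground sets are flats. -/
def latticeL (M₁ M₂ : Matroid α) : Set (Set α) :=
  {X | X ⊆ M₁.E ∪ M₂.E ∧ M₁.IsFlat (X ∩ M₁.E) ∧ M₂.IsFlat (X ∩ M₂.E)}

lemma iSup_eq_of_basis' {M : Matroid α} {I X : Set α} (hI : M.IsBasis' I X) :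
    (⨆ J ∈ {J : Set α | M.Indep J ∧ J ⊆ X}, J.encard) = I.encard := by
  apply le_antisymm
  · refine iSup₂_le fun J hJ => ?_
    obtain ⟨K, hK, hJK⟩ := hJ.1.subset_isBasis'_of_subset hJ.2
    exact le_trans (Set.encard_mono hJK) (hK.encard_eq_encard hI).le
  · exact le_iSup₂_of_le I ⟨hI.indep, hI.subset⟩ le_rfl

lemma rk_eq_of_basis' {M : Matroid α} {I X : Set α} (hI : M.IsBasis' I X) :
    rk M X = (I.ncard : ℤ) := by
  rw [rk, iSup_eq_of_basis' hI]; rfl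

lemma ncard_le_rk {M : Matroid α} [M.RankFinite] {J X : Set α}
    (hJ : M.Indep J) (hJX : J ⊆ X) : (J.ncard : ℤ) ≤ rk M X := by
  obtain ⟨K, hK, hJK⟩ := hJ.subset_isBasis'_of_subset hJX
  rw [rk_eq_of_basis' hK]
  exact_mod_cast Set.ncard_le_ncard hJK hK.indep.finite

lemma rk_mono {M : Matroid α} [M.RankFinite] {X Y : Set α} (h : X ⊆ Y) :
    rk M X ≤ rk M Y := by
  obtain ⟨I, hI⟩ := M.exists_isBasis' X
  rw [rk_eq_of_basis' hI]
  exact ncard_le_rk hI.indep (hI.subset.trans h)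

lemma rk_submod (M : Matroid α) [M.RankFinite] (X Y : Set α) :
    rk M (X ∪ Y) + rk M (X ∩ Y) ≤ rk M X + rk M Y := by
  obtain ⟨I, hI⟩ := M.exists_isBasis' (X ∩ Y)
  obtain ⟨J, hJ, hIJ⟩ := hI.indep.subset_isBasis'_of_subset
    (hI.subset.trans (inter_subset_left.trans subset_union_left))
  have hJfin : J.Finite := hJ.indep.finite
  rw [rk_eq_of_basis' hJ, rk_eq_of_basis' hI]
  have h1 : ((J ∩ X).ncard : ℤ) ≤ rk M X :=
    ncard_le_rk (hJ.indep.subset inter_subset_left) inter_subset_right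
  have h2 : ((J ∩ Y).ncard : ℤ) ≤ rk M Y :=
    ncard_le_rk (hJ.indep.subset inter_subset_left) inter_subset_right
  have hu : (J ∩ X) ∪ (J ∩ Y) = J := by
    rw [← inter_union_distrib_left, inter_eq_self_of_subset_left hJ.subset]
  have hi : (J ∩ X) ∩ (J ∩ Y) = J ∩ (X ∩ Y) := by
    ext; simp; tauto
  have hcard : (J ∩ X).ncard + (J ∩ Y).ncard = J.ncard + (J ∩ (X ∩ Y)).ncard := by
    rw [← Set.ncard_union_add_ncard_inter (J ∩ X) (J ∩ Y)
      (hJfin.subset inter_subset_left) (hJfin.subset inter_subset_left), hu, hi]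
  have hIle : I.ncard ≤ (J ∩ (X ∩ Y)).ncard :=
    Set.ncard_le_ncard (subset_inter hIJ hI.subset) (hJfin.subset inter_subset_left)
  have := add_le_add h1 h2
  omega

lemma subset_flat_of_rk_le {M : Matroid α} [M.RankFinite] {F P : Set α}
    (hF : M.IsFlat F) (hP : P ⊆ M.E) (h : rk M (F ∪ P) ≤ rk M F) : P ⊆ F := by
  obtain ⟨I, hI⟩ := M.exists_isBasis F hF.subset_ground
  intro e he
  by_contra heF
  have heI : e ∉ I := fun h' => heF (hI.subset h')
  have hecl : e ∉ M.closure I := by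
    rw [hI.closure_eq_closure, hF.closure]; exact heF
  have hins : M.Indep (insert e I) := by
    rw [hI.indep.insert_indep_iff_of_notMem heI]
    exact ⟨hP he, hecl⟩
  have hle : ((insert e I).ncard : ℤ) ≤ rk M (F ∪ P) :=
    ncard_le_rk hins (insert_subset (Or.inr he) (hI.subset.trans subset_union_left))
  rw [rk_eq_of_basis' hI.isBasis'] at h
  rw [Set.ncard_insert_of_notMem heI hI.indep.finite] at hle
  have := hle.trans h
  omega

/-- the Escher configuration is impossible. -/
theorem escher (M : Matroid α) [M.RankFinite] (l₁ l₂ l₃ p : Set α)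
    (h₁ : IsLine M l₁) (h₂ : IsLine M l₂) (h₃ : IsLine M l₃)
    (h₁₂ : Coplanar M l₁ l₂) (h₁₃ : Coplanar M l₁ l₃) (h₂₃ : Coplanar M l₂ l₃)
    (hspan : rk M (l₁ ∪ l₂ ∪ l₃) = 4)
    (hp : IsPoint M p) (hp₁ : p ⊆ l₁) (hp₂ : p ⊆ l₂) :
    p ⊆ l₃ := by
  have hXY : (l₁ ∪ l₃) ∪ (l₂ ∪ l₃) = l₁ ∪ l₂ ∪ l₃ := by
    ext; simp; tauto
  have hsub := rk_submod M (l₁ ∪ l₃) (l₂ ∪ l₃)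
  rw [hXY, hspan] at hsub
  have hint : rk M ((l₁ ∪ l₃) ∩ (l₂ ∪ l₃)) ≤ 2 := by
    have := add_le_add h₁₃ h₂₃
    omega
  have hsubset : l₃ ∪ p ⊆ (l₁ ∪ l₃) ∩ (l₂ ∪ l₃) :=
    union_subset (subset_inter subset_union_right subset_union_right)
      (subset_inter (hp₁.trans subset_union_left) (hp₂.trans subset_union_left))
  have hle : rk M (l₃ ∪ p) ≤ rk M l₃ := by
    rw [h₃.2]
    exact (rk_mono hsubset).trans hint
  exact subset_flat_of_rk_le h₃.1 (hp₁.trans h₁.1.subset_ground) hle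
end StickyKantor
end

section
/- Let M be a matroid and (H₁, H₂) a non-modular pair of hyperplanes. Then the modular cut generated by H₁ and H₂ consists exactly of {H₁, H₂, E(M)} and in particular is not a principal modular cut; hence (H₁, H₂) is intersectable. -/
open Set

namespace StickyKantor

variable {α : Type*}

/-- the modular cut generated by a non-modular pair of hyperplanes is
`{H₁, H₂, E}`, which is not principal; hence the pair is intersectable. -/
theorem nonmodular_hyperplane_pair_intersectable (M : Matroid α) [M.RankFinite]
    (H₁ H₂ : Set α) (h₁ : IsHyperplane M H₁) (h₂ : IsHyperplane M H₂)
    (hnm : 0 < mdefect M H₁ H₂) :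
    genCut M {H₁, H₂} = {H₁, H₂, M.E} ∧
      (¬ ∃ F, M.IsFlat F ∧ genCut M {H₁, H₂} = principalCut M F) ∧
      Intersectable M H₁ H₂ := by
  have hne : H₁ ≠ H₂ := by
    rintro rfl
    simp only [mdefect, union_self, inter_self] at hnm
    linarith
  have hnotmp : ¬ ModularPair M H₁ H₂ := by
    intro h
    unfold ModularPair at h
    unfold mdefect at hnm
    linarith
  have hE1 : H₁ ⊆ M.E := h₁.1.subset_ground
  have hE2 : H₂ ⊆ M.E := h₂.1.subset_ground
  -- {H₁, H₂, M.E} is a modular cut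
  have hMC : IsModularCut M {H₁, H₂, M.E} := by
    refine ⟨?_, ?_, ?_⟩
    · rintro F (rfl | rfl | rfl)
      · exact h₁.1
      · exact h₂.1
      · exact M.ground_isFlat
    · rintro F (rfl | rfl | rfl) F' hF' hsub
      · rcases eq_or_ne F F' with rfl | hne'
        · exact Or.inl rfl
        · exact Or.inr (Or.inr (h₁.2.2 F' hF' ⟨hsub, fun h => hne' (hsub.antisymm h)⟩))
      · rcases eq_or_ne F F' with rfl | hne'
        · exact Or.inr (Or.inl rfl)
        · exact Or.inr (Or.inr (h₂.2.2 F' hF' ⟨hsub, fun h => hne' (hsub.antisymm h)⟩))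
      · exact Or.inr (Or.inr (hsub.antisymm hF'.subset_ground).symm)
    · rintro F₁ (rfl | rfl | rfl) F₂ (rfl | rfl | rfl) hmp
      · rw [inter_self]; exact Or.inl rfl
      · exact absurd hmp hnotmp
      · rw [inter_eq_left.mpr hE1]; exact Or.inl rfl
      · exfalso
        apply hnotmp
        unfold ModularPair at hmp ⊢
        rw [union_comm, inter_comm] at hmp
        linarith
      · rw [inter_self]; exact Or.inr (Or.inl rfl)
      · rw [inter_eq_left.mpr hE2]; exact Or.inr (Or.inl rfl)
      · rw [inter_eq_right.mpr hE1]; exact Or.inl rfl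
      · rw [inter_eq_right.mpr hE2]; exact Or.inr (Or.inl rfl)
      · rw [inter_self]; exact Or.inr (Or.inr rfl)
  have hgen : genCut M {H₁, H₂} = {H₁, H₂, M.E} := by
    apply subset_antisymm
    · exact sInter_subset_of_mem ⟨hMC, by rintro x (rfl | rfl) <;> simp⟩
    · rintro F (rfl | rfl | rfl) <;> intro 𝓜 h𝓜
      · exact h𝓜.2 (Or.inl rfl)
      · exact h𝓜.2 (Or.inr rfl)
      · exact h𝓜.1.2.1 H₁ (h𝓜.2 (Or.inl rfl)) M.E M.ground_isFlat hE1
  have hnp : ¬ ∃ F, M.IsFlat F ∧ genCut M {H₁, H₂} = principalCut M F := by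
    rintro ⟨F, hF, hFeq⟩
    rw [hgen] at hFeq
    have hFmem : F ∈ ({H₁, H₂, M.E} : Set (Set α)) := by
      rw [hFeq]; exact ⟨hF, Subset.rfl⟩
    have hFH₁ : F ⊆ H₁ := by
      have : H₁ ∈ principalCut M F := by rw [← hFeq]; exact Or.inl rfl
      exact this.2
    have hFH₂ : F ⊆ H₂ := by
      have : H₂ ∈ principalCut M F := by rw [← hFeq]; exact Or.inr (Or.inl rfl)
      exact this.2
    rcases hFmem with rfl | rfl | rfl
    · exact h₂.2.1 (h₁.2.2 H₂ h₂.1 ⟨hFH₂, fun h => hne (hFH₂.antisymm h)⟩)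
    · exact h₁.2.1 (h₂.2.2 H₁ h₁.1 ⟨hFH₁, fun h => hne.symm (hFH₁.antisymm h)⟩)
    · exact h₁.2.1 (hE1.antisymm hFH₁)
  refine ⟨hgen, hnp, ?_⟩
  intro h
  have hflat : M.IsFlat (H₁ ∩ H₂) := by
    rw [Set.inter_eq_iInter]
    exact Matroid.IsFlat.iInter (by
      rintro (_ | _)
      · simpa using h₂.1
      · simpa using h₁.1)
  exact hnp ⟨H₁ ∩ H₂, hflat, h⟩
end StickyKantor
end

section
/- Let M be a hypermodular rank-4 matroid, l₁, l₂ disjoint coplanar lines, and M' a single-element extension of M (adding point p) in which cl_{M'}(l₁) and cl_{M'}(l₂) intersect. Then for every line l of M' containing p, the restriction l ∩ E(M) is a line of M. -/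
open Set

namespace StickyKantor

variable {α : Type*}

/-! ### The ℕ∞-valued rank `er` -/

noncomputable def er (M : Matroid α) (X : Set α) : ℕ∞ :=
  ⨆ I ∈ {I : Set α | M.Indep I ∧ I ⊆ X}, I.encard

lemma rk_def (M : Matroid α) (X : Set α) : rk M X = ((er M X).toNat : ℤ) := rfl

lemma encard_le_er {M : Matroid α} {I X : Set α} (hI : M.Indep I) (hIX : I ⊆ X) :
    I.encard ≤ er M X :=
  le_iSup₂ (f := fun I (_ : I ∈ {I : Set α | M.Indep I ∧ I ⊆ X}) => I.encard) I ⟨hI, hIX⟩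

lemma er_eq_of_basis' {M : Matroid α} {I X : Set α} (hI : M.IsBasis' I X) :
    er M X = I.encard := by
  refine le_antisymm (iSup₂_le fun J hJ => ?_) (encard_le_er hI.indep hI.subset)
  obtain ⟨I', hI', hJI'⟩ := hJ.1.subset_isBasis'_of_subset hJ.2
  exact le_trans (encard_mono hJI') (hI'.encard_eq_encard hI).le

lemma er_mono (M : Matroid α) {X Y : Set α} (h : X ⊆ Y) : er M X ≤ er M Y :=
  iSup₂_le fun J hJ => encard_le_er hJ.1 (hJ.2.trans h)

lemma er_ne_top (M : Matroid α) [M.RankFinite] (X : Set α) : er M X ≠ ⊤ := by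
  obtain ⟨I, hI⟩ := M.exists_isBasis' X
  rw [er_eq_of_basis' hI, encard_ne_top_iff]
  exact hI.indep.finite

lemma er_closure_eq (M : Matroid α) (X : Set α) : er M (M.closure X) = er M X := by
  obtain ⟨I, hI⟩ := M.exists_isBasis' X
  rw [er_eq_of_basis' hI, er_eq_of_basis' hI.isBasis_closure_right.isBasis']

lemma er_inter_ground (M : Matroid α) (X : Set α) : er M (X ∩ M.E) = er M X := by
  obtain ⟨I, hI⟩ := M.exists_isBasis' X
  rw [er_eq_of_basis' hI, er_eq_of_basis' hI.isBasis_inter_ground.isBasis']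

lemma er_submod (M : Matroid α) (X Y : Set α) :
    er M (X ∪ Y) + er M (X ∩ Y) ≤ er M X + er M Y := by
  obtain ⟨I, hI⟩ := M.exists_isBasis' (X ∩ Y)
  obtain ⟨J, hJ, hIJ⟩ := hI.indep.subset_isBasis'_of_subset
    (hI.subset.trans (inter_subset_left.trans subset_union_left))
  rw [er_eq_of_basis' hJ, er_eq_of_basis' hI]
  have h1 : (J ∩ X) ∪ (J ∩ Y) = J := by
    rw [← inter_union_distrib_left, inter_eq_self_of_subset_left hJ.subset]
  have h2 : I ⊆ (J ∩ X) ∩ (J ∩ Y) := by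
    refine subset_inter (subset_inter hIJ ?_) (subset_inter hIJ ?_)
    · exact hI.subset.trans inter_subset_left
    · exact hI.subset.trans inter_subset_right
  calc J.encard + I.encard ≤ ((J ∩ X) ∪ (J ∩ Y)).encard + ((J ∩ X) ∩ (J ∩ Y)).encard := by
        rw [h1]; exact add_le_add_right (encard_mono h2) _
    _ = (J ∩ X).encard + (J ∩ Y).encard := encard_union_add_encard_inter _ _
    _ ≤ er M X + er M Y :=
        add_le_add (encard_le_er (hJ.indep.subset inter_subset_left) inter_subset_right)
          (encard_le_er (hJ.indep.subset inter_subset_left) inter_subset_right)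

lemma er_insert_le (M : Matroid α) (x : α) (X : Set α) :
    er M (insert x X) ≤ er M X + 1 := by
  have h := er_submod M X {x}
  have h1 : er M {x} ≤ 1 := by
    obtain ⟨I, hI⟩ := M.exists_isBasis' {x}
    rw [er_eq_of_basis' hI]
    exact (encard_mono hI.subset).trans_eq (encard_singleton x)
  calc er M (insert x X) = er M (X ∪ {x}) := by rw [union_singleton]
    _ ≤ er M (X ∪ {x}) + er M (X ∩ {x}) := le_self_add
    _ ≤ er M X + er M {x} := h
    _ ≤ er M X + 1 := add_le_add_right h1 _

lemma er_insert_of_mem_closure {M : Matroid α} {x : α} {X : Set α} (h : x ∈ M.closure X) :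
    er M (insert x X) = er M X := by
  rw [← er_closure_eq M (insert x X), Matroid.closure_insert_eq_of_mem_closure h,
    er_closure_eq]

lemma er_insert_of_not_mem_closure {M : Matroid α} {x : α} {X : Set α}
    (hxE : x ∈ M.E) (h : x ∉ M.closure X) : er M (insert x X) = er M X + 1 := by
  obtain ⟨I, hI⟩ := M.exists_isBasis' X
  have hxI : x ∉ M.closure I := by rwa [hI.closure_eq_closure]
  have hxnotI : x ∉ I := fun hxi => hxI (M.mem_closure_of_mem' hxi hxE)
  have hind : M.Indep (insert x I) := by
    rw [hI.indep.insert_indep_iff_of_notMem hxnotI]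
    exact ⟨hxE, hxI⟩
  refine le_antisymm (er_insert_le M x X) ?_
  have h2 := encard_le_er hind (insert_subset_insert hI.subset)
  rw [er_eq_of_basis' hI]
  rwa [encard_insert_of_notMem hxnotI] at h2

lemma mem_closure_iff_er {M : Matroid α} [M.RankFinite] {x : α} {X : Set α} (hxE : x ∈ M.E) :
    x ∈ M.closure X ↔ er M (insert x X) = er M X := by
  refine ⟨er_insert_of_mem_closure, fun h => by_contra fun hx => ?_⟩
  rw [er_insert_of_not_mem_closure hxE hx] at h
  exact absurd ((ENat.add_one_le_iff (er_ne_top M X)).mp h.le) (lt_irrefl _)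

lemma flat_closure (M : Matroid α) (X : Set α) : M.IsFlat (M.closure X) := by
  have hne : Nonempty {F : Set α // M.IsFlat F ∧ X ∩ M.E ⊆ F} :=
    ⟨⟨M.E, M.ground_isFlat, inter_subset_right⟩⟩
  have : M.closure X = ⋂ F : {F : Set α // M.IsFlat F ∧ X ∩ M.E ⊆ F}, F.1 := by
    rw [Matroid.closure_def]
    ext x
    simp only [mem_sInter, mem_setOf_eq, mem_iInter, Subtype.forall]
  rw [this]
  exact Matroid.IsFlat.iInter fun F => F.2.1

lemma flat_of_closure_eq {M : Matroid α} {F : Set α} (h : M.closure F = F) : M.IsFlat F :=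
  h ▸ flat_closure M F

lemma subset_closure_of_er_le {M : Matroid α} {X Y : Set α} (hXY : X ⊆ Y) (hYE : Y ⊆ M.E)
    (h : er M Y ≤ er M X) (hfin : er M Y ≠ ⊤) : Y ⊆ M.closure X := by
  obtain ⟨I, hI⟩ := M.exists_isBasis' X
  obtain ⟨J, hJ, hIJ⟩ := hI.indep.subset_isBasis'_of_subset (hI.subset.trans hXY)
  have hJfin : J.Finite := by
    rw [er_eq_of_basis' hJ, encard_ne_top_iff] at hfin; exact hfin
  have hIJeq : I = J := by
    refine hJfin.eq_of_subset_of_encard_le' hIJ ?_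
    rw [← er_eq_of_basis' hJ, ← er_eq_of_basis' hI]; exact h
  have : Y ⊆ M.closure Y := M.subset_closure Y hYE
  rwa [← hJ.closure_eq_closure, ← hIJeq, hI.closure_eq_closure] at this

lemma flat_eq_of_er_le {M : Matroid α} {F F' : Set α} (hF : M.IsFlat F) (hF' : M.IsFlat F')
    (hss : F ⊆ F') (h : er M F' ≤ er M F) (hfin : er M F' ≠ ⊤) : F = F' := by
  refine hss.antisymm ?_
  have := subset_closure_of_er_le hss hF'.subset_ground h hfin
  rwa [hF.closure] at this


/-! ### Restriction -/

section Restrict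

variable {M M' : Matroid α}

lemma basis'_restrict_of_basis' (hres : M = M'.restrict M.E) {I X : Set α} (hX : X ⊆ M.E)
    (hI : M.IsBasis' I X) : M'.IsBasis' I X := by
  rw [hres, Matroid.isBasis'_restrict_iff, inter_eq_self_of_subset_left hX] at hI
  exact hI.1

lemma er_restrict (hres : M = M'.restrict M.E) {X : Set α} (hX : X ⊆ M.E) :
    er M X = er M' X := by
  obtain ⟨I, hI⟩ := M.exists_isBasis' X
  rw [er_eq_of_basis' hI, er_eq_of_basis' (basis'_restrict_of_basis' hres hX hI)]

lemma closure_restrict (hres : M = M'.restrict M.E) (hEE : M.E ⊆ M'.E) {X : Set α}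
    (hX : X ⊆ M.E) :
    M.closure X = M'.closure X ∩ M.E := by
  obtain ⟨I, hI⟩ := M.exists_isBasis' X
  have hI' : M'.IsBasis' I X := basis'_restrict_of_basis' hres hX hI
  rw [← hI.closure_eq_closure, ← hI'.closure_eq_closure]
  ext x
  rw [hI.indep.mem_closure_iff', mem_inter_iff, hI'.indep.mem_closure_iff']
  have hIE : I ⊆ M.E := hI.subset.trans hX
  constructor
  · rintro ⟨hxE, himp⟩
    refine ⟨⟨hEE hxE, fun hind => himp ?_⟩, hxE⟩
    rw [hres, Matroid.restrict_indep_iff]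
    exact ⟨hind, insert_subset hxE hIE⟩
  · rintro ⟨⟨_, himp⟩, hxE⟩
    refine ⟨hxE, fun hind => himp ?_⟩
    rw [hres, Matroid.restrict_indep_iff] at hind
    exact hind.1

lemma flat_restrict (hres : M = M'.restrict M.E) (hEE : M.E ⊆ M'.E) {F : Set α}
    (hF : M'.IsFlat F) :
    M.IsFlat (F ∩ M.E) := by
  refine flat_of_closure_eq (subset_antisymm ?_ (M.subset_closure _ inter_subset_right))
  rw [closure_restrict hres hEE inter_subset_right]
  refine inter_subset_inter_left _ ?_
  exact (M'.closure_subset_closure inter_subset_left).trans hF.closure.subset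

end Restrict


/-! ### Conversions between `rk` and `er` -/

lemma er_nat (M : Matroid α) [M.RankFinite] (X : Set α) : ∃ n : ℕ, er M X = (n : ℕ∞) :=
  ⟨(er M X).toNat, (ENat.coe_toNat (er_ne_top M X)).symm⟩

lemma rk_eq_iff {M : Matroid α} [M.RankFinite] {X : Set α} {n : ℕ} :
    rk M X = (n : ℤ) ↔ er M X = (n : ℕ∞) := by
  rw [rk_def]
  constructor
  · intro h
    have h' : (er M X).toNat = n := by exact_mod_cast h
    rw [← h', ENat.coe_toNat (er_ne_top M X)]
  · intro h
    rw [h]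
    simp

lemma rk_le_iff {M : Matroid α} [M.RankFinite] {X : Set α} {n : ℕ} :
    rk M X ≤ (n : ℤ) ↔ er M X ≤ (n : ℕ∞) := by
  rw [rk_def]
  obtain ⟨m, hm⟩ := er_nat M X
  rw [hm]
  simp only [ENat.toNat_coe]
  exact_mod_cast Iff.rfl

lemma modularPair_er {M : Matroid α} [M.RankFinite] {X Y : Set α} (h : ModularPair M X Y) :
    er M X + er M Y = er M (X ∪ Y) + er M (X ∩ Y) := by
  obtain ⟨a, ha⟩ := er_nat M X
  obtain ⟨b, hb⟩ := er_nat M Y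
  obtain ⟨c, hc⟩ := er_nat M (X ∪ Y)
  obtain ⟨d, hd⟩ := er_nat M (X ∩ Y)
  rw [ModularPair, rk_def, rk_def, rk_def, rk_def, ha, hb, hc, hd] at h
  simp only [ENat.toNat_coe] at h
  rw [ha, hb, hc, hd]
  have : a + b = c + d := by exact_mod_cast h
  exact_mod_cast this

/-! ### The modular cut of the extension -/

lemma mem_closure_inter_of_modularPair {M M' : Matroid α} [M'.RankFinite]
    (hres : M = M'.restrict M.E) {p : α} (hpE : p ∈ M'.E)
    {F₁ F₂ : Set α} (h1E : F₁ ⊆ M.E) (h2E : F₂ ⊆ M.E)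
    (hmp : er M F₁ + er M F₂ = er M (F₁ ∪ F₂) + er M (F₁ ∩ F₂))
    (hp1 : p ∈ M'.closure F₁) (hp2 : p ∈ M'.closure F₂) : p ∈ M'.closure (F₁ ∩ F₂) := by
  have e1 : er M' (insert p F₁) = er M' F₁ := er_insert_of_mem_closure hp1
  have e2 : er M' (insert p F₂) = er M' F₂ := er_insert_of_mem_closure hp2
  have hU : insert p F₁ ∪ insert p F₂ = insert p (F₁ ∪ F₂) := by
    rw [insert_union, union_insert, insert_idem]
  have hI : insert p F₁ ∩ insert p F₂ = insert p (F₁ ∩ F₂) := by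
    ext x
    simp only [mem_inter_iff, mem_insert_iff]
    tauto
  have hsub := er_submod M' (insert p F₁) (insert p F₂)
  rw [hU, hI, e1, e2] at hsub
  rw [← er_restrict hres h1E, ← er_restrict hres h2E, hmp,
    er_restrict hres (union_subset h1E h2E),
    er_restrict hres (inter_subset_left.trans h1E)] at hsub
  have hm1 : er M' (F₁ ∪ F₂) ≤ er M' (insert p (F₁ ∪ F₂)) := er_mono M' (subset_insert _ _)
  have hm2 : er M' (F₁ ∩ F₂) ≤ er M' (insert p (F₁ ∩ F₂)) := er_mono M' (subset_insert _ _)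
  rw [mem_closure_iff_er hpE]
  obtain ⟨a, ha⟩ := er_nat M' (insert p (F₁ ∪ F₂))
  obtain ⟨b, hb⟩ := er_nat M' (insert p (F₁ ∩ F₂))
  obtain ⟨c, hc⟩ := er_nat M' (F₁ ∪ F₂)
  obtain ⟨d, hd⟩ := er_nat M' (F₁ ∩ F₂)
  rw [ha, hc] at hsub hm1
  rw [hb, hd] at hsub hm2
  have h1 : a + b ≤ c + d := by exact_mod_cast hsub
  have h2 : c ≤ a := by exact_mod_cast hm1
  have h3 : d ≤ b := by exact_mod_cast hm2
  rw [hb, hd]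
  exact_mod_cast (by omega : b = d)

/-- in a single-element extension intersecting two disjoint coplanar
lines, every line through the new point restricts to a line of `M`. -/
theorem new_lines_restrict_to_lines (M M' : Matroid α) [M.RankFinite] [M'.RankFinite]
    (hhm : Hypermodular M) (hrank : rk M M.E = 4)
    (l₁ l₂ : Set α) (h₁ : IsLine M l₁) (h₂ : IsLine M l₂)
    (hdisj : l₁ ∩ l₂ = ∅) (hcop : Coplanar M l₁ l₂)
    (p : α) (hp : p ∉ M.E) (hext : IsExtension M' M) (hE : M'.E = insert p M.E)
    (hmeet : (M'.closure l₁ ∩ M'.closure l₂).Nonempty) :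
    ∀ l, IsLine M' l → p ∈ l → IsLine M (l ∩ M.E) := by
  obtain ⟨hEsub, hres⟩ := hext
  have hpE' : p ∈ M'.E := by rw [hE]; exact mem_insert _ _
  have h1E : l₁ ⊆ M.E := h₁.1.subset_ground
  have h2E : l₂ ⊆ M.E := h₂.1.subset_ground
  have her1 : er M l₁ = 2 := rk_eq_iff.mp (by exact_mod_cast h₁.2)
  have her2 : er M l₂ = 2 := rk_eq_iff.mp (by exact_mod_cast h₂.2)
  have herE : er M M.E = 4 := rk_eq_iff.mp (by exact_mod_cast hrank)
  -- Step 0 : p lies in both closures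
  have hpcl : p ∈ M'.closure l₁ ∧ p ∈ M'.closure l₂ := by
    obtain ⟨x, hx1, hx2⟩ := hmeet
    have hxE' : x ∈ M'.E := M'.closure_subset_ground l₁ hx1
    rw [hE, mem_insert_iff] at hxE'
    rcases hxE' with rfl | hxE
    · exact ⟨hx1, hx2⟩
    · exfalso
      have hx1' : x ∈ l₁ := by
        have hmem : x ∈ M.closure l₁ := by
          rw [closure_restrict hres hEsub h1E]; exact ⟨hx1, hxE⟩
        rwa [h₁.1.closure] at hmem
      have hx2' : x ∈ l₂ := by
        have hmem : x ∈ M.closure l₂ := by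
          rw [closure_restrict hres hEsub h2E]; exact ⟨hx2, hxE⟩
        rwa [h₂.1.closure] at hmem
      have : x ∈ l₁ ∩ l₂ := ⟨hx1', hx2'⟩
      rw [hdisj] at this
      exact this
  -- Step 3 : rank of the union is 3
  have her12 : er M (l₁ ∪ l₂) = 3 := by
    have hle : er M (l₁ ∪ l₂) ≤ 3 := rk_le_iff.mp (by exact_mod_cast hcop)
    refine le_antisymm hle ?_
    obtain ⟨I, hI⟩ := M.exists_isBasis' l₂
    have hIne : I.Nonempty := by
      rw [← encard_ne_zero, ← er_eq_of_basis' hI, her2]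
      decide
    obtain ⟨q, hqI⟩ := hIne
    have hql2 : q ∈ l₂ := hI.subset hqI
    have hqE : q ∈ M.E := h2E hql2
    have hq1 : q ∉ M.closure l₁ := by
      rw [h₁.1.closure]
      intro hq
      have : q ∈ l₁ ∩ l₂ := ⟨hq, hql2⟩
      rw [hdisj] at this
      exact this
    have h3 : er M (insert q l₁) = 3 := by
      rw [er_insert_of_not_mem_closure hqE hq1, her1]; rfl
    exact h3 ▸ er_mono M (insert_subset (mem_union_right _ hql2) subset_union_left)
  set P0 := M.closure (l₁ ∪ l₂) with hP0def
  have hP0flat : M.IsFlat P0 := flat_closure M _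
  have herP0 : er M P0 = 3 := by rw [hP0def, er_closure_eq, her12]
  have hP0E : P0 ⊆ M.E := M.closure_subset_ground _
  have h1P0 : l₁ ⊆ P0 := subset_union_left.trans (M.subset_closure _ (union_subset h1E h2E))
  have hpP0 : p ∈ M'.closure P0 := M'.closure_subset_closure h1P0 hpcl.1
  -- rank-3 flats are hyperplanes, and two distinct ones meet in a rank-2 flat
  have plane_union : ∀ A B : Set α, M.IsFlat A → M.IsFlat B → er M A = 3 → er M B = 3 →
      A ≠ B → er M (A ∪ B) = 4 := by
    intro A B hA hB hA3 hB3 hAB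
    have hABle : er M (A ∪ B) ≤ 4 := by
      rw [← herE]
      exact er_mono M (union_subset hA.subset_ground hB.subset_ground)
    have hnss : ¬ B ⊆ A := by
      intro hBA
      exact hAB (flat_eq_of_er_le hB hA hBA (by rw [hA3, hB3]) (by rw [hA3]; decide)).symm
    obtain ⟨x, hxB, hxA⟩ := not_subset.mp hnss
    have h4 : er M (insert x A) = 4 := by
      rw [er_insert_of_not_mem_closure (hB.subset_ground hxB) (by rwa [hA.closure]), hA3]
      rfl
    exact le_antisymm hABle
      (h4 ▸ er_mono M (insert_subset (mem_union_right _ hxB) subset_union_left))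
  have hyperplane : ∀ A : Set α, M.IsFlat A → er M A = 3 → IsHyperplane M A := by
    intro A hA hA3
    refine ⟨hA, ?_, ?_⟩
    · intro h
      rw [h, herE] at hA3
      exact absurd hA3 (by decide)
    · intro F hF hAF
      obtain ⟨x, hxF, hxA⟩ := exists_of_ssubset hAF
      have h4 : er M (insert x A) = 4 := by
        rw [er_insert_of_not_mem_closure (hF.subset_ground hxF) (by rwa [hA.closure]), hA3]
        rfl
      have hF4 : er M M.E ≤ er M F := by
        rw [herE, ← h4]
        exact er_mono M (insert_subset hxF hAF.subset)
      exact flat_eq_of_er_le hF M.ground_isFlat hF.subset_ground hF4 (er_ne_top M _)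
  have plane_inter : ∀ A B : Set α, M.IsFlat A → M.IsFlat B → er M A = 3 → er M B = 3 →
      A ≠ B → M.IsFlat (A ∩ B) ∧ er M (A ∩ B) = 2 ∧
        er M A + er M B = er M (A ∪ B) + er M (A ∩ B) := by
    intro A B hA hB hA3 hB3 hAB
    have hmp := modularPair_er (hhm A B (hyperplane A hA hA3) (hyperplane B hB hB3))
    have hu := plane_union A B hA hB hA3 hB3 hAB
    have hflat : M.IsFlat (A ∩ B) := by
      refine flat_of_closure_eq (subset_antisymm ?_
        (M.subset_closure _ (inter_subset_left.trans hA.subset_ground)))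
      refine subset_inter ?_ ?_
      · exact (M.closure_subset_closure inter_subset_left).trans hA.closure.subset
      · exact (M.closure_subset_closure inter_subset_right).trans hB.closure.subset
    refine ⟨hflat, ?_, hmp⟩
    rw [hA3, hB3, hu] at hmp
    obtain ⟨d, hd⟩ := er_nat M (A ∩ B)
    rw [hd] at hmp ⊢
    have : (3 : ℕ) + 3 = 4 + d := by exact_mod_cast hmp
    exact_mod_cast (by omega : d = 2)
  -- the combination step
  have combine : ∀ A B : Set α, ∀ q, M.IsFlat A → M.IsFlat B → er M A = 3 → er M B = 3 →
      A ≠ B → q ∈ A → q ∈ B → p ∈ M'.closure A → p ∈ M'.closure B →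
      ∃ L, M.IsFlat L ∧ er M L = 2 ∧ q ∈ L ∧ p ∈ M'.closure L := by
    intro A B q hA hB hA3 hB3 hAB hqA hqB hpA hpB
    obtain ⟨hflat, h2, hmp⟩ := plane_inter A B hA hB hA3 hB3 hAB
    exact ⟨A ∩ B, hflat, h2, ⟨hqA, hqB⟩,
      mem_closure_inter_of_modularPair hres hpE' hA.subset_ground hB.subset_ground hmp hpA hpB⟩
  -- points outside P0
  have outer : ∀ e, e ∉ P0 → e ∈ M.E →
      ∃ L, M.IsFlat L ∧ er M L = 2 ∧ e ∈ L ∧ p ∈ M'.closure L := by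
    intro e heP0 heE
    have hecl : ∀ X : Set α, X ⊆ l₁ ∪ l₂ → e ∉ M.closure X := by
      intro X hX hmem
      exact heP0 (M.closure_subset_closure hX hmem)
    have hA3 : er M (M.closure (insert e l₁)) = 3 := by
      rw [er_closure_eq, er_insert_of_not_mem_closure heE (hecl l₁ subset_union_left), her1]
      rfl
    have hB3 : er M (M.closure (insert e l₂)) = 3 := by
      rw [er_closure_eq, er_insert_of_not_mem_closure heE (hecl l₂ subset_union_right), her2]
      rfl
    have h1A : l₁ ⊆ M.closure (insert e l₁) :=
      (subset_insert _ _).trans (M.subset_closure _ (insert_subset heE h1E))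
    have h2B : l₂ ⊆ M.closure (insert e l₂) :=
      (subset_insert _ _).trans (M.subset_closure _ (insert_subset heE h2E))
    have heA : e ∈ M.closure (insert e l₁) :=
      M.mem_closure_of_mem (mem_insert _ _) (insert_subset heE h1E)
    have heB : e ∈ M.closure (insert e l₂) :=
      M.mem_closure_of_mem (mem_insert _ _) (insert_subset heE h2E)
    have hAB : M.closure (insert e l₁) ≠ M.closure (insert e l₂) := by
      intro h
      have hsub : insert e (l₁ ∪ l₂) ⊆ M.closure (insert e l₁) := by
        refine insert_subset heA (union_subset h1A ?_)
        rw [h]; exact h2B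
      have h4 : er M (insert e (l₁ ∪ l₂)) = 4 := by
        rw [er_insert_of_not_mem_closure heE heP0, her12]
        rfl
      have hle : er M (insert e (l₁ ∪ l₂)) ≤ 3 := by
        rw [← hA3]; exact er_mono M hsub
      rw [h4] at hle
      exact absurd hle (by decide)
    exact combine _ _ e (flat_closure M _) (flat_closure M _) hA3 hB3 hAB heA heB
      (M'.closure_subset_closure h1A hpcl.1) (M'.closure_subset_closure h2B hpcl.2)
  -- every point of the ground set lies on a "good" line
  have good : ∀ q, q ∈ M.E → ∃ L, M.IsFlat L ∧ er M L = 2 ∧ q ∈ L ∧ p ∈ M'.closure L := by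
    intro q hqE
    by_cases hq1 : q ∈ l₁
    · exact ⟨l₁, h₁.1, her1, hq1, hpcl.1⟩
    by_cases hq2 : q ∈ l₂
    · exact ⟨l₂, h₂.1, her2, hq2, hpcl.2⟩
    by_cases hqP0 : q ∈ P0
    · -- take a point outside P0
      obtain ⟨e, heE, heP0⟩ : ∃ e, e ∈ M.E ∧ e ∉ P0 := by
        by_contra hcon
        push_neg at hcon
        have : er M M.E ≤ er M P0 := er_mono M fun x hx => hcon x hx
        rw [herE, herP0] at this
        exact absurd this (by decide)
      obtain ⟨Le, hLeflat, hLe2, heLe, hpLe⟩ := outer e heP0 heE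
      by_cases hqLe : q ∈ Le
      · exact ⟨Le, hLeflat, hLe2, hqLe, hpLe⟩
      have hLeE : Le ⊆ M.E := hLeflat.subset_ground
      have hA3 : er M (M.closure (insert q Le)) = 3 := by
        rw [er_closure_eq, er_insert_of_not_mem_closure hqE (by rwa [hLeflat.closure]), hLe2]
        rfl
      have hLeA : Le ⊆ M.closure (insert q Le) :=
        (subset_insert _ _).trans (M.subset_closure _ (insert_subset hqE hLeE))
      have hAne : M.closure (insert q Le) ≠ P0 := by
        intro h
        exact heP0 (h ▸ hLeA heLe)
      exact combine _ _ q (flat_closure M _) hP0flat hA3 herP0 hAne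
        (M.mem_closure_of_mem (mem_insert _ _) (insert_subset hqE hLeE)) hqP0
        (M'.closure_subset_closure hLeA hpLe) hpP0
    · exact outer q hqP0 hqE
  -- the final argument
  rintro l ⟨hlflat, hlrk⟩ hpl
  have hl2 : er M' l = 2 := rk_eq_iff.mp (by exact_mod_cast hlrk)
  have hlE' : l ⊆ M'.E := hlflat.subset_ground
  have hflat : M.IsFlat (l ∩ M.E) := flat_restrict hres hEsub hlflat
  refine ⟨hflat, ?_⟩
  have hgoal : er M (l ∩ M.E) = 2 := by
    rw [er_restrict hres inter_subset_right]
    have hle : er M' (l ∩ M.E) ≤ 2 := by rw [← hl2]; exact er_mono M' inter_subset_left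
    by_contra hne
    have hlins : l = insert p (l ∩ M.E) := by
      ext x
      simp only [mem_insert_iff, mem_inter_iff]
      constructor
      · intro hx
        have := hlE' hx
        rw [hE, mem_insert_iff] at this
        rcases this with rfl | hxE
        · exact Or.inl rfl
        · exact Or.inr ⟨hx, hxE⟩
      · rintro (rfl | ⟨hx, _⟩)
        · exact hpl
        · exact hx
    have h1 : er M' (l ∩ M.E) = 1 := by
      have hins := er_insert_le M' p (l ∩ M.E)
      rw [← hlins, hl2] at hins
      obtain ⟨d, hd⟩ := er_nat M' (l ∩ M.E)
      rw [hd] at hle hins hne ⊢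
      have hd2 : d ≤ 2 := by exact_mod_cast hle
      have hd1 : (2 : ℕ) ≤ d + 1 := by exact_mod_cast hins
      have : d ≠ 2 := fun h => hne (by exact_mod_cast h)
      exact_mod_cast (by omega : d = 1)
    have hpncl : p ∉ M'.closure (l ∩ M.E) := by
      intro hmem
      have := er_insert_of_mem_closure hmem
      rw [← hlins, hl2, h1] at this
      exact absurd this (by decide)
    obtain ⟨I, hI⟩ := M'.exists_isBasis' (l ∩ M.E)
    have hIcard : I.encard = 1 := by rw [← er_eq_of_basis' hI, h1]
    obtain ⟨q, rfl⟩ := encard_eq_one.mp hIcard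
    have hql : q ∈ l ∩ M.E := hI.subset rfl
    obtain ⟨L, hLflat, hL2, hqL, hpL⟩ := good q hql.2
    have hLE : L ⊆ M.E := hLflat.subset_ground
    have herL' : er M' L = 2 := by rw [← er_restrict hres hLE, hL2]
    have hqF : q ∈ M'.closure L := M'.subset_closure L (hLE.trans hEsub) hqL
    have hF2 : er M' (M'.closure L) = 2 := by rw [er_closure_eq, herL']
    -- {p, q} has rank 2 in M'
    have hpq_ne : p ∉ ({q} : Set α) := by
      intro h
      rw [mem_singleton_iff] at h
      exact hp (h ▸ hql.2)
    have hpq : p ∉ M'.closure {q} := fun h =>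
      hpncl (M'.closure_subset_closure (singleton_subset_iff.mpr hql) h)
    have hind : M'.Indep (insert p {q}) := by
      rw [hI.indep.insert_indep_iff_of_notMem hpq_ne]
      exact ⟨hpE', hpq⟩
    have hpq2 : er M' {p, q} = 2 := by
      refine le_antisymm ?_ ?_
      · rw [← hl2]
        exact er_mono M' (insert_subset hpl (singleton_subset_iff.mpr hql.1))
      · have := encard_le_er hind subset_rfl
        rwa [encard_pair (fun h => hpq_ne (by rw [h]; exact rfl))] at this
    -- both l and cl'(L) equal cl'({p,q})
    have hsl : ({p, q} : Set α) ⊆ l := insert_subset hpl (singleton_subset_iff.mpr hql.1)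
    have hsF : ({p, q} : Set α) ⊆ M'.closure L :=
      insert_subset hpL (singleton_subset_iff.mpr hqF)
    have hlsub : l ⊆ M'.closure {p, q} :=
      subset_closure_of_er_le hsl hlE' (by rw [hl2, hpq2]) (by rw [hl2]; decide)
    have hLl : M'.closure L ⊆ l := by
      have hFsub : M'.closure L ⊆ M'.closure {p, q} :=
        subset_closure_of_er_le hsF (M'.closure_subset_ground _) (by rw [hF2, hpq2])
          (by rw [hF2]; decide)
      have hcl : M'.closure {p, q} ⊆ l := by
        have h' := M'.closure_subset_closure hsl
        rwa [hlflat.closure] at h'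
      exact hFsub.trans hcl
    have hLsub : L ⊆ l ∩ M.E :=
      subset_inter ((M'.subset_closure L (hLE.trans hEsub)).trans hLl) hLE
    have : (2 : ℕ∞) ≤ er M' (l ∩ M.E) := by
      rw [← herL']
      exact er_mono M' hLsub
    rw [h1] at this
    exact absurd this (by decide)
  exact rk_eq_iff.mpr hgoal

end StickyKantor
end

section
/- Assume M is a matroid on ground set T, M' an extension of M, and X, Y ⊆ E(M') are such that X ∩ T and Y ∩ T are disjoint coplanar lines in M, X ∩ Y is a flat in M', and X \ T ⊆ Y. If (X,Y) is a modular pair in M', then no point x of the line X ∩ T lies in cl_{M'}(Y). -/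
open Set

namespace StickyKantor

variable {α : Type*}

/-! ### Auxiliary rank lemmas -/

/-- The rank of a set as an extended natural number. -/
noncomputable def erk (M : Matroid α) (X : Set α) : ℕ∞ :=
  ⨆ I ∈ {I : Set α | M.Indep I ∧ I ⊆ X}, I.encard

lemma rk_eq_erk (M : Matroid α) (X : Set α) : rk M X = ((erk M X).toNat : ℤ) := rfl

lemma encard_le_erk {M : Matroid α} {I X : Set α} (hI : M.Indep I) (hIX : I ⊆ X) :
    I.encard ≤ erk M X :=
  le_iSup₂_of_le I ⟨hI, hIX⟩ le_rfl

lemma erk_eq_of_basis' {M : Matroid α} {I X : Set α} (hI : M.IsBasis' I X) :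
    erk M X = I.encard := by
  refine le_antisymm (iSup₂_le fun J hJ => ?_) (encard_le_erk hI.indep hI.subset)
  obtain ⟨J', hJ', hJJ'⟩ := hJ.1.subset_isBasis'_of_subset hJ.2
  exact (Set.encard_mono hJJ').trans_eq (hJ'.encard_eq_encard hI)

lemma erk_ne_top {M : Matroid α} [M.RankFinite] (X : Set α) : erk M X ≠ ⊤ := by
  obtain ⟨I, hI⟩ := M.exists_isBasis' X
  rw [erk_eq_of_basis' hI]
  exact hI.indep.finite.encard_lt_top.ne

lemma erk_mono {M : Matroid α} {X Y : Set α} (h : X ⊆ Y) : erk M X ≤ erk M Y :=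
  iSup₂_le fun J hJ => encard_le_erk hJ.1 (hJ.2.trans h)

lemma erk_submod (M : Matroid α) (A B : Set α) :
    erk M (A ∪ B) + erk M (A ∩ B) ≤ erk M A + erk M B := by
  obtain ⟨I, hI⟩ := M.exists_isBasis' (A ∩ B)
  obtain ⟨J, hJ, hIJ⟩ :=
    hI.indep.subset_isBasis'_of_subset (hI.subset.trans (inter_subset_left.trans subset_union_left))
  have hJA : (J ∩ A).encard ≤ erk M A :=
    encard_le_erk (hJ.indep.subset inter_subset_left) inter_subset_right
  have hJB : (J ∩ B).encard ≤ erk M B :=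
    encard_le_erk (hJ.indep.subset inter_subset_left) inter_subset_right
  have hU : (J ∩ A) ∪ (J ∩ B) = J := by
    rw [← inter_union_distrib_left, inter_eq_self_of_subset_left hJ.subset]
  have hInt : (J ∩ A) ∩ (J ∩ B) = J ∩ (A ∩ B) := by
    ext y; simp only [mem_inter_iff]; tauto
  have hkey := Set.encard_union_add_encard_inter (J ∩ A) (J ∩ B)
  rw [hU, hInt] at hkey
  have h1 : erk M (A ∪ B) = J.encard := erk_eq_of_basis' hJ
  have h2 : erk M (A ∩ B) ≤ (J ∩ (A ∩ B)).encard := by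
    rw [erk_eq_of_basis' hI]
    exact Set.encard_mono (subset_inter hIJ hI.subset)
  calc erk M (A ∪ B) + erk M (A ∩ B) ≤ J.encard + (J ∩ (A ∩ B)).encard := by
        rw [h1]; exact add_le_add_right h2 _
    _ = (J ∩ A).encard + (J ∩ B).encard := hkey
    _ ≤ erk M A + erk M B := add_le_add hJA hJB

lemma erk_insert_of_mem_closure {M : Matroid α} {x : α} {Y : Set α}
    (h : x ∈ M.closure Y) (hY : Y ⊆ M.E) : erk M (insert x Y) = erk M Y := by
  obtain ⟨I, hI⟩ := M.exists_isBasis Y hY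
  refine le_antisymm ?_ (erk_mono (subset_insert _ _))
  have hsub : insert x Y ⊆ M.closure Y := insert_subset h (M.subset_closure Y hY)
  calc erk M (insert x Y) ≤ erk M (M.closure Y) := erk_mono hsub
    _ = I.encard := erk_eq_of_basis' hI.isBasis_closure_right.isBasis'
    _ = erk M Y := (erk_eq_of_basis' hI.isBasis').symm

lemma erk_insert_of_not_mem_closure {M : Matroid α} {x : α} {F : Set α}
    (hx : x ∈ M.E) (hxF : x ∉ M.closure F) (hF : F ⊆ M.E) :
    erk M F + 1 ≤ erk M (insert x F) := by
  obtain ⟨I, hI⟩ := M.exists_isBasis F hF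
  have hxI : x ∉ I := fun h => hxF (M.subset_closure F hF (hI.subset h))
  have hind : M.Indep (insert x I) := by
    rw [hI.indep.insert_indep_iff_of_notMem hxI, hI.closure_eq_closure]
    exact ⟨hx, hxF⟩
  have hle := encard_le_erk hind (insert_subset_insert hI.subset)
  rwa [Set.encard_insert_of_notMem hxI, ← erk_eq_of_basis' hI.isBasis'] at hle

/-- under the assumptions (D) with `X \ T ⊆ Y`, if `(X,Y)` is a
modular pair in `M'` then no point of the line `X ∩ T` lies in `cl_{M'}(Y)`. -/
theorem not_in_closure (M M' : Matroid α) [M.RankFinite] [M'.RankFinite]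
    (hext : IsExtension M' M) (X Y : Set α)
    (hX : X ⊆ M'.E) (hY : Y ⊆ M'.E)
    (hlX : IsLine M (X ∩ M.E)) (hlY : IsLine M (Y ∩ M.E))
    (hdisj : (X ∩ M.E) ∩ (Y ∩ M.E) = ∅)
    (hcop : Coplanar M (X ∩ M.E) (Y ∩ M.E))
    (hflat : M'.IsFlat (X ∩ Y)) (hXY : X \ M.E ⊆ Y)
    (hmod : ModularPair M' X Y) :
    ∀ x ∈ X ∩ M.E, x ∉ M'.closure Y := by
  rintro x ⟨hxX, hxT⟩ hxcl
  -- `x` is not in `Y`, hence not in the flat `X ∩ Y`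
  have hxY : x ∉ Y := fun h =>
    (eq_empty_iff_forall_notMem.mp hdisj x) ⟨⟨hxX, hxT⟩, ⟨h, hxT⟩⟩
  have hxE' : x ∈ M'.E := hext.1 hxT
  have hXYE : X ∩ Y ⊆ M'.E := inter_subset_left.trans hX
  have hxclF : x ∉ M'.closure (X ∩ Y) := by
    rw [hflat.closure]; exact fun h => hxY h.2
  have hcoe : ∀ S : Set α, (((erk M' S).toNat : ℕ) : ℕ∞) = erk M' S :=
    fun S => ENat.coe_toNat_eq_self.mpr (erk_ne_top S)
  -- the modular-pair equation, in `ℕ∞`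
  have hmod' : erk M' X + erk M' Y = erk M' (X ∪ Y) + erk M' (X ∩ Y) := by
    have h : (((erk M' X).toNat : ℤ)) + ((erk M' Y).toNat : ℤ)
        = ((erk M' (X ∪ Y)).toNat : ℤ) + ((erk M' (X ∩ Y)).toNat : ℤ) := hmod
    have hnat : (erk M' X).toNat + (erk M' Y).toNat
        = (erk M' (X ∪ Y)).toNat + (erk M' (X ∩ Y)).toNat := by exact_mod_cast h
    rw [← hcoe X, ← hcoe Y, ← hcoe (X ∪ Y), ← hcoe (X ∩ Y)]
    exact_mod_cast hnat
  -- submodularity applied to `X` and `insert x Y`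
  have hsub := erk_submod M' X (insert x Y)
  have hU : X ∪ insert x Y = X ∪ Y := by
    rw [union_insert]; exact insert_eq_self.mpr (Or.inl hxX)
  have hI : X ∩ insert x Y = insert x (X ∩ Y) := by
    rw [inter_comm, insert_inter_of_mem hxX, inter_comm]
  rw [hU, hI, erk_insert_of_mem_closure hxcl hY] at hsub
  -- adding `x` to the flat `X ∩ Y` increases rank
  have hins : erk M' (X ∩ Y) + 1 ≤ erk M' (insert x (X ∩ Y)) :=
    erk_insert_of_not_mem_closure hxE' hxclF hXYE
  have hchain : erk M' (X ∪ Y) + erk M' (X ∩ Y) + 1 ≤ erk M' (X ∪ Y) + erk M' (X ∩ Y) :=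
    calc erk M' (X ∪ Y) + erk M' (X ∩ Y) + 1
        = erk M' (X ∪ Y) + (erk M' (X ∩ Y) + 1) := by ring
      _ ≤ erk M' (X ∪ Y) + erk M' (insert x (X ∩ Y)) := add_le_add_right hins _
      _ ≤ erk M' X + erk M' Y := hsub
      _ = erk M' (X ∪ Y) + erk M' (X ∩ Y) := hmod'
  have hne : erk M' (X ∪ Y) + erk M' (X ∩ Y) ≠ ⊤ := by
    refine WithTop.add_ne_top.mpr ?_
    exact ⟨erk_ne_top _, erk_ne_top _⟩
  exact absurd hchain (by simp [ENat.add_one_le_iff hne])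
end StickyKantor
end
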